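/- Let V be a C² function on [0, z̄] satisfying -（σ²/2）V'' + ρV - H(z, V') = 0 on (0, z̄) with Neumann boundary conditions V'(0) = V'(z̄) = 0, where H(z, λ) = (1-γ)(γ/w)^{γ/(1-γ)} max(0,λ)^{1/(1-γ)} + kλ + z^α/B^{α-1}, with constants σ, ρ, w, B > 0, k ≥ 0, α, γ ∈ (0,1). Then 0 ≤ V(z) ≤ z̄^α/(ρ B^{α-1}) for all z ∈ [0, z̄]. -/

import Mathlib

open Set

/-- At a local minimum of a (locally differentiable) function, the second
derivative (when it exists) is nonnegative. -/
lemma second_deriv_nonneg_at_localmin (W : ℝ → ℝ) (a b z₀ L : ℝ) (hz₀ : z₀ ∈ Set.Ioo a b)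
    (hWdiff : ∀ x ∈ Set.Ioo a b, DifferentiableAt ℝ W x)
    (hmin : IsLocalMin W z₀)
    (hL : HasDerivAt (deriv W) L z₀) : 0 ≤ L := by
  by_contra hcon
  push_neg at hcon
  have h0 : deriv W z₀ = 0 := hmin.deriv_eq_zero
  have hslope : Filter.Tendsto (slope (deriv W) z₀) (nhdsWithin z₀ {z₀}ᶜ) (nhds L) :=
    hasDerivAt_iff_tendsto_slope.mp hL
  have hsub : Set.Ioi z₀ ⊆ {z₀}ᶜ := fun x hx => ne_of_gt hx
  have hslope' : Filter.Tendsto (slope (deriv W) z₀) (nhdsWithin z₀ (Set.Ioi z₀)) (nhds L) :=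
    hslope.mono_left (nhdsWithin_mono _ hsub)
  have hev1 : ∀ᶠ x in nhdsWithin z₀ (Set.Ioi z₀), slope (deriv W) z₀ x < 0 :=
    hslope'.eventually_lt_const hcon
  have hev2 : ∀ᶠ x in nhdsWithin z₀ (Set.Ioi z₀), x < b :=
    eventually_nhdsWithin_of_eventually_nhds (Filter.Tendsto.eventually_lt_const hz₀.2 Filter.tendsto_id)
  have hev3 : ∀ᶠ x in nhdsWithin z₀ (Set.Ioi z₀), W z₀ ≤ W x :=
    eventually_nhdsWithin_of_eventually_nhds hmin
  obtain ⟨u, hu, hIoc⟩ := mem_nhdsGT_iff_exists_Ioc_subset.mp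
    ((hev1.and (hev2.and hev3)) : _)
  have hub : u < b := (hIoc ⟨hu, le_refl u⟩).2.1
  have hIccsub : Set.Icc z₀ u ⊆ Set.Ioo a b := fun x hx =>
    ⟨lt_of_lt_of_le hz₀.1 hx.1, lt_of_le_of_lt hx.2 hub⟩
  have hderivneg : ∀ x ∈ interior (Set.Icc z₀ u), deriv W x < 0 := by
    intro x hx
    rw [interior_Icc] at hx
    have hx' := hIoc ⟨hx.1, hx.2.le⟩
    have hs := hx'.1
    rw [slope_def_field, h0, sub_zero] at hs
    by_contra hge
    push_neg at hge
    exact absurd (div_nonneg hge (by linarith [hx.1] : (0:ℝ) ≤ x - z₀)) (not_le.mpr hs)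
  have hanti : StrictAntiOn W (Set.Icc z₀ u) := by
    apply strictAntiOn_of_deriv_neg (convex_Icc _ _)
    · exact fun x hx => (hWdiff x (hIccsub hx)).continuousAt.continuousWithinAt
    · exact hderivneg
  have h1 : W u < W z₀ := hanti ⟨le_refl _, hu.le⟩ ⟨hu.le, le_refl _⟩ hu
  have h2 : W z₀ ≤ W u := (hIoc ⟨hu, le_refl u⟩).2.2
  linarith

/-- A minimizer of `f = g-antiderivative + ε(x - zb/2)²`-type function on `[0,zb]`,
where the derivative `g + 2ε(x - zb/2)` has `g` vanishing at the endpoints,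
must be interior. -/
lemma min_interior (zb ε : ℝ) (hz : 0 < zb) (hε : 0 < ε) (f g : ℝ → ℝ)
    (hf : ContinuousOn f (Set.Icc 0 zb))
    (hfd : ∀ x ∈ Set.Ioo 0 zb, HasDerivAt f (g x + ε * (2 * (x - zb/2))) x)
    (hg : ContinuousOn g (Set.Icc 0 zb)) (hg0 : g 0 = 0) (hg1 : g zb = 0)
    (z₀ : ℝ) (hz₀ : z₀ ∈ Set.Icc 0 zb)
    (hmin : IsMinOn f (Set.Icc 0 zb) z₀) : z₀ ∈ Set.Ioo 0 zb := by
  have hc : (0:ℝ) < ε * zb / 2 := by positivity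
  constructor
  · -- z₀ ≠ 0
    rcases eq_or_lt_of_le hz₀.1 with h | h
    · exfalso
      subst h
      have hcont : ContinuousWithinAt g (Set.Icc 0 zb) 0 := hg 0 ⟨le_refl _, hz.le⟩
      rw [ContinuousWithinAt, hg0] at hcont
      obtain ⟨δ, hδ, hball⟩ := Metric.tendsto_nhdsWithin_nhds.mp hcont _ hc
      set z := min (δ/2) (zb/4) with hzdef
      have hz2 : (0:ℝ) < z := lt_min (by linarith) (by linarith)
      have hzle : z ≤ zb/4 := min_le_right _ _
      have hzleδ : z ≤ δ/2 := min_le_left _ _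
      have hzIcc : z ∈ Set.Icc (0:ℝ) zb := ⟨hz2.le, by linarith⟩
      obtain ⟨ξ, hξ, hslope⟩ := exists_hasDerivAt_eq_slope f
        (fun x => g x + ε * (2 * (x - zb/2))) hz2
        (hf.mono (Set.Icc_subset_Icc (le_refl _) (by linarith)))
        (fun x hx => hfd x ⟨hx.1, by linarith [hx.2]⟩)
      have hmin' : f 0 ≤ f z := hmin hzIcc
      have hsl : 0 ≤ (f z - f 0) / (z - 0) := div_nonneg (by linarith) (by linarith)
      rw [← hslope] at hsl
      have hgξ : ε * zb / 2 ≤ g ξ := by nlinarith [hξ.1, hξ.2]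
      have hξIcc : ξ ∈ Set.Icc (0:ℝ) zb := ⟨hξ.1.le, by linarith [hξ.2]⟩
      have hdist : dist ξ 0 < δ := by
        rw [Real.dist_eq, sub_zero, abs_of_pos hξ.1]
        linarith [hξ.2]
      have := hball hξIcc hdist
      rw [Real.dist_eq, sub_zero] at this
      linarith [le_abs_self (g ξ)]
    · exact h
  · -- z₀ ≠ zb
    rcases eq_or_lt_of_le hz₀.2 with h | h
    · exfalso
      subst h
      have hcont : ContinuousWithinAt g (Set.Icc 0 z₀) z₀ := hg z₀ ⟨hz.le, le_refl _⟩
      rw [ContinuousWithinAt, hg1] at hcont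
      obtain ⟨δ, hδ, hball⟩ := Metric.tendsto_nhdsWithin_nhds.mp hcont _ hc
      set z := max (z₀ - δ/2) (3*z₀/4) with hzdef
      have hzlt : z < z₀ := max_lt (by linarith) (by linarith)
      have hzge : 3*z₀/4 ≤ z := le_max_right _ _
      have hzgeδ : z₀ - δ/2 ≤ z := le_max_left _ _
      have hzIcc : z ∈ Set.Icc (0:ℝ) z₀ := ⟨by linarith, hzlt.le⟩
      obtain ⟨ξ, hξ, hslope⟩ := exists_hasDerivAt_eq_slope f
        (fun x => g x + ε * (2 * (x - z₀/2))) hzlt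
        (hf.mono (Set.Icc_subset_Icc (by linarith) (le_refl _)))
        (fun x hx => hfd x ⟨by linarith [hx.1], hx.2⟩)
      have hmin' : f z₀ ≤ f z := hmin hzIcc
      have hsl : (f z₀ - f z) / (z₀ - z) ≤ 0 :=
        div_nonpos_of_nonpos_of_nonneg (by linarith) (by linarith)
      rw [← hslope] at hsl
      have hgξ : g ξ ≤ -(ε * z₀ / 2) := by nlinarith [hξ.1, hξ.2]
      have hξIcc : ξ ∈ Set.Icc (0:ℝ) z₀ := ⟨by linarith [hξ.1], hξ.2.le⟩
      have hdist : dist ξ z₀ < δ := by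
        rw [Real.dist_eq, abs_of_nonpos (by linarith [hξ.2])]
        linarith [hξ.1]
      have := hball hξIcc hdist
      rw [Real.dist_eq, sub_zero] at this
      linarith [neg_abs_le (g ξ)]
    · exact h

set_option maxHeartbeats 1000000 in
theorem stmt_0 (zb σ ρ w B k α γ : ℝ)
(hz : 0 < zb) (hσ : 0 < σ) (hρ : 0 < ρ) (hw : 0 < w) (hB : 0 < B)
    (hk : 0 ≤ k) (hα : α ∈ Set.Ioo (0:ℝ) 1) (hγ : γ ∈ Set.Ioo (0:ℝ) 1)
    (V : ℝ → ℝ)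
    (hV : DifferentiableOn ℝ V (Set.Icc 0 zb))
    (hV' : ContinuousOn (deriv V) (Set.Icc 0 zb))
    (hV'' : ∀ z ∈ Set.Ioo 0 zb, DifferentiableAt ℝ (deriv V) z)
    (hV''c : ContinuousOn (deriv (deriv V)) (Set.Ioo 0 zb))
    (heq : ∀ z ∈ Set.Ioo 0 zb,
      -(σ^2/2) * deriv (deriv V) z + ρ * V z -
        ((1-γ) * (γ/w) ^ (γ/(1-γ)) * (max 0 (deriv V z)) ^ (1/(1-γ))
          + k * deriv V z + z ^ α / B ^ (α-1)) = 0)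
    (hbc0 : deriv V 0 = 0) (hbc1 : deriv V zb = 0) :
    ∀ z ∈ Set.Icc 0 zb, 0 ≤ V z ∧ V z ≤ zb ^ α / (ρ * B ^ (α-1)) := by
  obtain ⟨hα0, hα1⟩ := hα
  obtain ⟨hγ0, hγ1⟩ := hγ
  have hc₁ : 0 ≤ (1-γ) * (γ/w) ^ (γ/(1-γ)) :=
    mul_nonneg (by linarith) (Real.rpow_nonneg (by positivity) _)
  have hp1 : (1:ℝ) ≤ 1/(1-γ) := by
    rw [le_div_iff₀ (by linarith)]; linarith
  have hVdiffAt : ∀ x ∈ Set.Ioo 0 zb, HasDerivAt V (deriv V x) x := fun x hx =>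
    ((hV x (Set.Ioo_subset_Icc_self hx)).differentiableAt
      (Icc_mem_nhds hx.1 hx.2)).hasDerivAt
  have hq : ∀ (c x : ℝ), HasDerivAt (fun y => c * (y - zb/2)^2) (c * (2 * (x - zb/2))) x := by
    intro c x
    have h1 : HasDerivAt (fun y : ℝ => y - zb/2) 1 x := (hasDerivAt_id x).sub_const _
    have h2 := (h1.pow 2).const_mul c
    exact h2.congr_deriv (by push_cast; ring)
  have hlin : ∀ (c x : ℝ), HasDerivAt (fun y => c * (2 * (y - zb/2))) (c * 2) x := by
    intro c x
    have h1 : HasDerivAt (fun y : ℝ => y - zb/2) 1 x := (hasDerivAt_id x).sub_const _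
    have h2 := (h1.const_mul (2:ℝ)).const_mul c
    exact h2.congr_deriv (by ring)
  -- Lower bound key estimate
  have lowerkey : ∀ ε > 0, ∀ z ∈ Set.Icc 0 zb,
      -(ε * (σ^2 + k*zb + ρ*zb^2/4)) ≤ ρ * V z := by
    intro ε hε
    set W := fun x => V x + ε * (x - zb/2)^2 with hWdef
    have contW : ContinuousOn W (Set.Icc 0 zb) :=
      hV.continuousOn.add (Continuous.continuousOn (by continuity))
    obtain ⟨z₀, hz₀I, hmin⟩ := isCompact_Icc.exists_isMinOn
      (Set.nonempty_Icc.mpr hz.le) contW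
    have hWd : ∀ x ∈ Set.Ioo 0 zb,
        HasDerivAt W (deriv V x + ε * (2 * (x - zb/2))) x := fun x hx =>
      (hVdiffAt x hx).add (hq ε x)
    have hz₀ : z₀ ∈ Set.Ioo 0 zb :=
      min_interior zb ε hz hε W (deriv V) contW hWd hV' hbc0 hbc1 z₀ hz₀I hmin
    have hloc : IsLocalMin W z₀ := hmin.isLocalMin (Icc_mem_nhds hz₀.1 hz₀.2)
    have hd0 : deriv V z₀ + ε * (2 * (z₀ - zb/2)) = 0 := by
      rw [← (hWd z₀ hz₀).deriv]; exact hloc.deriv_eq_zero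
    have hEq : deriv W =ᶠ[nhds z₀] (fun x => deriv V x + ε * (2 * (x - zb/2))) := by
      filter_upwards [isOpen_Ioo.mem_nhds hz₀] with x hx
      exact (hWd x hx).deriv
    have hG : HasDerivAt (fun x => deriv V x + ε * (2 * (x - zb/2)))
        (deriv (deriv V) z₀ + ε * 2) z₀ :=
      ((hV'' z₀ hz₀).hasDerivAt).add (hlin ε z₀)
    have hWd2 : HasDerivAt (deriv W) (deriv (deriv V) z₀ + ε * 2) z₀ :=
      hG.congr_of_eventuallyEq hEq
    have hsec : 0 ≤ deriv (deriv V) z₀ + ε * 2 :=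
      second_deriv_nonneg_at_localmin W 0 zb z₀ _ hz₀
        (fun x hx => (hWd x hx).differentiableAt) hloc hWd2
    have he := heq z₀ hz₀
    have hmaxt : 0 ≤ (1-γ) * (γ/w) ^ (γ/(1-γ)) * (max 0 (deriv V z₀)) ^ (1/(1-γ)) :=
      mul_nonneg hc₁ (Real.rpow_nonneg (le_max_left _ _) _)
    have hzα : 0 ≤ z₀ ^ α / B ^ (α-1) :=
      div_nonneg (Real.rpow_nonneg hz₀.1.le _) (Real.rpow_pos_of_pos hB _).le
    have hdV : deriv V z₀ = ε * (zb - 2*z₀) := by linear_combination hd0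
    have hdVlb : -(ε*zb) ≤ deriv V z₀ := by
      rw [hdV]
      nlinarith [mul_nonneg hε.le (by linarith [hz₀.2] : (0:ℝ) ≤ 2*zb - 2*z₀)]
    have hV2lb : -(2*ε) ≤ deriv (deriv V) z₀ := by linarith
    have hk1 : k * (-(ε*zb)) ≤ k * deriv V z₀ := mul_le_mul_of_nonneg_left hdVlb hk
    have hs1 : σ^2/2 * (-(2*ε)) ≤ σ^2/2 * deriv (deriv V) z₀ :=
      mul_le_mul_of_nonneg_left hV2lb (by positivity)
    have h5 : -(ε*σ^2) - k*(ε*zb) ≤ ρ * V z₀ := by linarith [he, hmaxt, hzα, hk1, hs1]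
    intro z hzmem
    have hW : V z₀ + ε * (z₀ - zb/2)^2 ≤ V z + ε * (z - zb/2)^2 :=
      isMinOn_iff.mp hmin z hzmem
    have hψz : (z - zb/2)^2 ≤ (zb/2)^2 := by nlinarith [hzmem.1, hzmem.2]
    have hVz : V z₀ ≤ V z + ε * (zb/2)^2 := by
      nlinarith [mul_le_mul_of_nonneg_left hψz hε.le,
        mul_nonneg hε.le (sq_nonneg (z₀ - zb/2))]
    have hmul : ρ * V z₀ ≤ ρ * (V z + ε * (zb/2)^2) :=
      mul_le_mul_of_nonneg_left hVz hρ.le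
    nlinarith [h5, hmul]
  -- Upper bound key estimate
  have upperkey : ∀ ε, 0 < ε → ε * zb ≤ 1 → ∀ z ∈ Set.Icc 0 zb,
      ρ * V z ≤ zb ^ α / B ^ (α-1)
        + ε * (σ^2 + (1-γ) * (γ/w) ^ (γ/(1-γ)) * zb + k*zb + ρ*zb^2/4) := by
    intro ε hε hεzb
    set N := fun x => -V x + ε * (x - zb/2)^2 with hNdef
    have contN : ContinuousOn N (Set.Icc 0 zb) :=
      hV.continuousOn.neg.add (Continuous.continuousOn (by continuity))
    obtain ⟨z₀, hz₀I, hmin⟩ := isCompact_Icc.exists_isMinOn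
      (Set.nonempty_Icc.mpr hz.le) contN
    have hNd : ∀ x ∈ Set.Ioo 0 zb,
        HasDerivAt N (-(deriv V x) + ε * (2 * (x - zb/2))) x := fun x hx =>
      (hVdiffAt x hx).neg.add (hq ε x)
    have hz₀ : z₀ ∈ Set.Ioo 0 zb :=
      min_interior zb ε hz hε N (fun x => -(deriv V x)) contN hNd hV'.neg
        (by simp [hbc0]) (by simp [hbc1]) z₀ hz₀I hmin
    have hloc : IsLocalMin N z₀ := hmin.isLocalMin (Icc_mem_nhds hz₀.1 hz₀.2)
    have hd0 : -(deriv V z₀) + ε * (2 * (z₀ - zb/2)) = 0 := by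
      rw [← (hNd z₀ hz₀).deriv]; exact hloc.deriv_eq_zero
    have hEq : deriv N =ᶠ[nhds z₀] (fun x => -(deriv V x) + ε * (2 * (x - zb/2))) := by
      filter_upwards [isOpen_Ioo.mem_nhds hz₀] with x hx
      exact (hNd x hx).deriv
    have hG : HasDerivAt (fun x => -(deriv V x) + ε * (2 * (x - zb/2)))
        (-(deriv (deriv V) z₀) + ε * 2) z₀ :=
      ((hV'' z₀ hz₀).hasDerivAt).neg.add (hlin ε z₀)
    have hNd2 : HasDerivAt (deriv N) (-(deriv (deriv V) z₀) + ε * 2) z₀ :=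
      hG.congr_of_eventuallyEq hEq
    have hsec : 0 ≤ -(deriv (deriv V) z₀) + ε * 2 :=
      second_deriv_nonneg_at_localmin N 0 zb z₀ _ hz₀
        (fun x hx => (hNd x hx).differentiableAt) hloc hNd2
    have he := heq z₀ hz₀
    have hdV : deriv V z₀ = ε * (2*z₀ - zb) := by linear_combination -hd0
    have hdVub : deriv V z₀ ≤ ε * zb := by
      rw [hdV]
      nlinarith [mul_nonneg hε.le (by linarith [hz₀.2] : (0:ℝ) ≤ 2*zb - 2*z₀)]
    have hmaxle : max 0 (deriv V z₀) ≤ ε * zb := max_le (by positivity) hdVub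
    have hpow : (max 0 (deriv V z₀)) ^ (1/(1-γ)) ≤ ε * zb := by
      calc (max 0 (deriv V z₀)) ^ (1/(1-γ)) ≤ (ε*zb) ^ (1/(1-γ)) :=
            Real.rpow_le_rpow (le_max_left _ _) hmaxle (by positivity)
        _ ≤ (ε*zb) ^ (1:ℝ) := Real.rpow_le_rpow_of_exponent_ge (by positivity) hεzb hp1
        _ = ε * zb := Real.rpow_one _
    have hzα : z₀ ^ α / B ^ (α-1) ≤ zb ^ α / B ^ (α-1) := by
      have h := Real.rpow_le_rpow hz₀.1.le hz₀.2.le hα0.le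
      exact div_le_div_of_nonneg_right h (Real.rpow_pos_of_pos hB _).le
    have hs1 : σ^2/2 * deriv (deriv V) z₀ ≤ σ^2/2 * (2*ε) :=
      mul_le_mul_of_nonneg_left (by linarith) (by positivity)
    have hc1 : (1-γ) * (γ/w) ^ (γ/(1-γ)) * (max 0 (deriv V z₀)) ^ (1/(1-γ))
        ≤ (1-γ) * (γ/w) ^ (γ/(1-γ)) * (ε*zb) := mul_le_mul_of_nonneg_left hpow hc₁
    have hk1 : k * deriv V z₀ ≤ k * (ε*zb) := mul_le_mul_of_nonneg_left hdVub hk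
    have h5 : ρ * V z₀ ≤ ε*σ^2 + (1-γ) * (γ/w) ^ (γ/(1-γ)) * (ε*zb) + k*(ε*zb)
        + zb ^ α / B ^ (α-1) := by
      linarith [he, hs1, hc1, hk1, hzα]
    intro z hzmem
    have hN : -V z₀ + ε * (z₀ - zb/2)^2 ≤ -V z + ε * (z - zb/2)^2 :=
      isMinOn_iff.mp hmin z hzmem
    have hψz : (z - zb/2)^2 ≤ (zb/2)^2 := by nlinarith [hzmem.1, hzmem.2]
    have hVz : V z ≤ V z₀ + ε * (zb/2)^2 := by
      nlinarith [mul_le_mul_of_nonneg_left hψz hε.le,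
        mul_nonneg hε.le (sq_nonneg (z₀ - zb/2))]
    have hmul : ρ * V z ≤ ρ * (V z₀ + ε * (zb/2)^2) :=
      mul_le_mul_of_nonneg_left hVz hρ.le
    nlinarith [h5, hmul]
  -- Conclude by letting ε → 0
  intro z hzmem
  constructor
  · have hC : (0:ℝ) < σ^2 + k*zb + ρ*zb^2/4 := by positivity
    by_contra hneg
    push_neg at hneg
    have hρV : ρ * V z < 0 := mul_neg_of_pos_of_neg hρ hneg
    have hεp : 0 < -(ρ * V z) / (2*(σ^2 + k*zb + ρ*zb^2/4)) :=
      div_pos (by linarith) (by linarith)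
    have hkey := lowerkey _ hεp z hzmem
    have heq2 : -(ρ*V z)/(2*(σ^2 + k*zb + ρ*zb^2/4)) * (σ^2 + k*zb + ρ*zb^2/4)
        = -(ρ*V z)/2 := by
      field_simp
    rw [heq2] at hkey
    linarith
  · have hfin : ρ * V z ≤ zb ^ α / B ^ (α-1) := by
      by_contra hcon
      push_neg at hcon
      set C := σ^2 + (1-γ) * (γ/w) ^ (γ/(1-γ)) * zb + k*zb + ρ*zb^2/4 with hCdef
      set T := zb ^ α / B ^ (α-1) with hTdef
      have hC : (0:ℝ) < C := by
        have h1 : 0 ≤ (1-γ) * (γ/w) ^ (γ/(1-γ)) * zb := mul_nonneg hc₁ hz.le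
        have h2 : 0 ≤ k*zb := mul_nonneg hk hz.le
        have h3 : (0:ℝ) < σ^2 := by positivity
        have h4 : (0:ℝ) ≤ ρ*zb^2/4 := by positivity
        rw [hCdef]; linarith
      set ε := min (1/zb) ((ρ*V z - T)/(2*C)) with hεdef
      have hεp : 0 < ε := lt_min (by positivity) (div_pos (by linarith) (by linarith))
      have hεzb : ε * zb ≤ 1 := by
        have h1 : ε ≤ 1/zb := min_le_left _ _
        calc ε * zb ≤ (1/zb) * zb := mul_le_mul_of_nonneg_right h1 hz.le
          _ = 1 := by field_simp
      have hkey := upperkey ε hεp hεzb z hzmem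
      have h2 : ε * C ≤ ((ρ*V z - T)/(2*C)) * C :=
        mul_le_mul_of_nonneg_right (min_le_right _ _) (by linarith)
      have h3 : ((ρ*V z - T)/(2*C)) * C = (ρ*V z - T)/2 := by
        field_simp
      rw [h3] at h2
      clear_value C T ε
      linarith
    rw [show zb ^ α / (ρ * B ^ (α-1)) = zb ^ α / B ^ (α-1) / ρ from by
      rw [div_div, mul_comm]]
    rw [le_div_iff₀ hρ]
    linarith
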